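/- Let a, b ∈ ℂ with a ≠ b. There is a unique formal power series Q ∈ ℂ[[X]] such that Q·(exp(aX) − exp(bX)) = X·(a·exp(bX) − b·exp(aX)), where exp(aX) ∈ ℂ[[X]] denotes the power series ∑_{m≥0} aᵐXᵐ/m!. This Q has constant coefficient 1, and for every integer n ≥ 2, Q is a series solution of the Hirzebruch functional equation for n with constant c = (−1)^{n−1}·(aⁿ − bⁿ)/(a − b). -/

import Mathlib

open PowerSeries

/-- Substitution of a one-variable power series `Q` into a multivariate power series `g`
(intended for `g` with zero constant coefficient, e.g. `X j - X i`): the coefficient of the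
substituted series at a monomial `d` only receives contributions from `Q`'s coefficients up to
the total degree of `d`, since `g ^ m` has order at least `m`. -/
noncomputable def mvSubst {n : ℕ} (Q : PowerSeries ℂ) (g : MvPowerSeries (Fin n) ℂ) :
    MvPowerSeries (Fin n) ℂ :=
  fun d => ∑ m ∈ Finset.range ((d.sum fun _ v => v) + 1),
    PowerSeries.coeff m Q * MvPowerSeries.coeff d (g ^ m)

/-- `Q` is a series solution of the Hirzebruch functional equation for `n` with constant `c`:
`∑ i ∏_{j ≠ i} Q(z_j - z_i)/(z_j - z_i) = c` with denominators cleared. -/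
def HirzebruchSeriesEq (n : ℕ) (c : ℂ) (Q : PowerSeries ℂ) : Prop :=
  ∑ i : Fin n,
      (∏ j ∈ Finset.univ.erase i,
          mvSubst Q (MvPowerSeries.X j - MvPowerSeries.X i)) *
        ∏ p ∈ Finset.univ.filter fun p : Fin n × Fin n => p.1 ≠ p.2 ∧ p.1 ≠ i,
          (MvPowerSeries.X p.2 - MvPowerSeries.X p.1)
    = MvPowerSeries.C (σ := Fin n) (R := ℂ) c *
        ∏ p ∈ Finset.univ.filter fun p : Fin n × Fin n => p.1 ≠ p.2,
          (MvPowerSeries.X p.2 - MvPowerSeries.X p.1)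

/-- `f` satisfies the Hirzebruch ODE `f f''' - 3 f' f'' = 6 q₁ (f')² + 12 q₂ f f' + 12 q₃ f²`. -/
def HirzebruchODE (q₁ q₂ q₃ : ℂ) (f : PowerSeries ℂ) : Prop :=
  f * (d⁄dX ℂ) ((d⁄dX ℂ) ((d⁄dX ℂ) f)) - 3 * (d⁄dX ℂ) f * (d⁄dX ℂ) ((d⁄dX ℂ) f)
    = PowerSeries.C (R := ℂ) (6 * q₁) * ((d⁄dX ℂ) f) ^ 2
      + PowerSeries.C (R := ℂ) (12 * q₂) * f * (d⁄dX ℂ) f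
      + PowerSeries.C (R := ℂ) (12 * q₃) * f ^ 2

/-- The formal power series `exp(aX) = ∑ aᵐ Xᵐ / m!`. -/
noncomputable def expAX (a : ℂ) : PowerSeries ℂ :=
  PowerSeries.mk fun m => a ^ m / m.factorial

namespace Hirz

section MvSubstPart

variable {n : ℕ}

local notation "R" => MvPowerSeries (Fin n) ℂ

lemma coeff_mvSubst (Q : PowerSeries ℂ) (g : R) (d : Fin n →₀ ℕ) :
    @MvPowerSeries.coeff (Fin n) ℂ _ d (mvSubst Q g) =
      ∑ m ∈ Finset.range ((d.sum fun _ v => v) + 1),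
        @PowerSeries.coeff ℂ _ m Q * @MvPowerSeries.coeff (Fin n) ℂ _ d (g ^ m) := rfl

lemma degree_eq_sum (d : Fin n →₀ ℕ) : (d.sum fun _ v => v) = d.degree := by
  rw [Finsupp.degree, Finsupp.sum]
  rfl

lemma degree_add (a b : Fin n →₀ ℕ) : (a + b).degree = a.degree + b.degree := by
  simp [Finsupp.degree_eq_weight_one, map_add]

lemma coeff_pow_zero {g : R} (hg : @MvPowerSeries.constantCoeff (Fin n) ℂ _ g = 0)
    {d : Fin n →₀ ℕ} {m : ℕ} (hm : d.degree < m) :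
    @MvPowerSeries.coeff (Fin n) ℂ _ d (g ^ m) = 0 := by
  apply MvPowerSeries.coeff_eq_zero_of_constantCoeff_nilpotent (m := 1)
  · simpa using hg
  · omega

/-- partial sum representation -/
lemma coeff_mvSubst_eq {g : R} (hg : @MvPowerSeries.constantCoeff (Fin n) ℂ _ g = 0)
    (Q : PowerSeries ℂ) {d : Fin n →₀ ℕ} {N : ℕ} (hN : d.degree < N) :
    @MvPowerSeries.coeff (Fin n) ℂ _ d (mvSubst Q g) =
      @MvPowerSeries.coeff (Fin n) ℂ _ d (∑ m ∈ Finset.range N, @MvPowerSeries.C (Fin n) ℂ _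
        (@PowerSeries.coeff ℂ _ m Q) * g ^ m) := by
  rw [coeff_mvSubst, map_sum]
  simp only [MvPowerSeries.coeff_C_mul]
  rw [degree_eq_sum]
  apply Finset.sum_subset
  · intro x hx
    simp only [Finset.mem_range] at hx ⊢
    omega
  · intro x _ hx
    simp only [Finset.mem_range, not_lt] at hx
    rw [coeff_pow_zero hg (by omega), mul_zero]

lemma mvSubst_add (P Q : PowerSeries ℂ) (g : R) :
    mvSubst (P + Q) g = mvSubst P g + mvSubst Q g := by
  ext d
  rw [map_add]
  simp only [coeff_mvSubst, map_add, add_mul, Finset.sum_add_distrib]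

lemma mvSubst_sub (P Q : PowerSeries ℂ) (g : R) :
    mvSubst (P - Q) g = mvSubst P g - mvSubst Q g := by
  ext d
  rw [map_sub]
  simp only [coeff_mvSubst, map_sub, sub_mul, Finset.sum_sub_distrib]

lemma mvSubst_C (c : ℂ) (g : R) :
    mvSubst (@PowerSeries.C ℂ _ c) g = @MvPowerSeries.C (Fin n) ℂ _ c := by
  ext d
  rw [coeff_mvSubst]
  rw [Finset.sum_eq_single 0]
  · by_cases h : d = 0 <;> simp [MvPowerSeries.coeff_C, MvPowerSeries.coeff_one, h]
  · intro m _ hm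
    rw [PowerSeries.coeff_C, if_neg hm, zero_mul]
  · simp

lemma mvSubst_X {g : R} (hg : @MvPowerSeries.constantCoeff (Fin n) ℂ _ g = 0) :
    mvSubst PowerSeries.X g = g := by
  ext d
  rw [coeff_mvSubst]
  rw [Finset.sum_eq_single 1]
  · simp
  · intro m _ hm
    rw [PowerSeries.coeff_X, if_neg hm, zero_mul]
  · intro h
    simp only [Finset.mem_range, not_lt] at h
    have hd : d.degree = 0 := by
      have := degree_eq_sum d
      omega
    have : d = 0 := by
      rwa [Finsupp.degree_eq_zero_iff] at hd
    subst this
    simp [hg]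

lemma mvSubst_mul {g : R} (hg : @MvPowerSeries.constantCoeff (Fin n) ℂ _ g = 0)
    (P Q : PowerSeries ℂ) :
    mvSubst (P * Q) g = mvSubst P g * mvSubst Q g := by
  classical
  ext d
  set N := d.degree + 1 with hNdef
  have hdN : d.degree < N := by omega
  rw [coeff_mvSubst_eq hg _ hdN]
  have hrhs : @MvPowerSeries.coeff (Fin n) ℂ _ d (mvSubst P g * mvSubst Q g)
      = @MvPowerSeries.coeff (Fin n) ℂ _ d
        ((∑ m ∈ Finset.range N, @MvPowerSeries.C (Fin n) ℂ _ (@PowerSeries.coeff ℂ _ m P) * g ^ m) *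
         (∑ m ∈ Finset.range N, @MvPowerSeries.C (Fin n) ℂ _ (@PowerSeries.coeff ℂ _ m Q) * g ^ m)) := by
    rw [MvPowerSeries.coeff_mul, MvPowerSeries.coeff_mul]
    apply Finset.sum_congr rfl
    intro p hp
    rw [Finset.HasAntidiagonal.mem_antidiagonal] at hp
    have h1 : (p.1).degree < N := by
      have : p.1.degree ≤ d.degree := by
        rw [← hp, degree_add]; omega
      omega
    have h2 : (p.2).degree < N := by
      have : p.2.degree ≤ d.degree := by
        rw [← hp, degree_add]; omega
      omega
    rw [coeff_mvSubst_eq hg P h1, coeff_mvSubst_eq hg Q h2]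
  rw [hrhs]
  have rhs2 : (∑ m ∈ Finset.range N, @MvPowerSeries.C (Fin n) ℂ _ (@PowerSeries.coeff ℂ _ m P) * g ^ m) *
      (∑ m ∈ Finset.range N, @MvPowerSeries.C (Fin n) ℂ _ (@PowerSeries.coeff ℂ _ m Q) * g ^ m)
      = ∑ kl ∈ Finset.range N ×ˢ Finset.range N,
          @MvPowerSeries.C (Fin n) ℂ _ (@PowerSeries.coeff ℂ _ kl.1 P * @PowerSeries.coeff ℂ _ kl.2 Q)
            * g ^ (kl.1 + kl.2) := by
    rw [Finset.sum_mul_sum, ← Finset.sum_product']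
    apply Finset.sum_congr rfl
    intro kl _
    rw [mul_mul_mul_comm, ← map_mul, ← pow_add]
  rw [rhs2]
  have lhs_eq : (∑ m ∈ Finset.range N,
        @MvPowerSeries.C (Fin n) ℂ _ (@PowerSeries.coeff ℂ _ m (P * Q)) * g ^ m)
      = ∑ kl ∈ (Finset.range N).biUnion (fun m => Finset.HasAntidiagonal.antidiagonal m),
          @MvPowerSeries.C (Fin n) ℂ _ (@PowerSeries.coeff ℂ _ kl.1 P * @PowerSeries.coeff ℂ _ kl.2 Q)
            * g ^ (kl.1 + kl.2) := by
    rw [Finset.sum_biUnion]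
    · apply Finset.sum_congr rfl
      intro m _
      rw [PowerSeries.coeff_mul, map_sum, Finset.sum_mul]
      apply Finset.sum_congr rfl
      intro kl hkl
      rw [Finset.HasAntidiagonal.mem_antidiagonal] at hkl
      rw [hkl]
    · intro x _ y _ hxy
      simp only [Function.onFun]
      apply Finset.disjoint_left.mpr
      intro kl h1 h2
      rw [Finset.HasAntidiagonal.mem_antidiagonal] at h1 h2
      exact hxy (h1 ▸ h2)
  rw [lhs_eq]
  have hsub : (Finset.range N).biUnion (fun m => Finset.HasAntidiagonal.antidiagonal m)
      ⊆ Finset.range N ×ˢ Finset.range N := by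
    intro kl hkl
    simp only [Finset.mem_biUnion, Finset.HasAntidiagonal.mem_antidiagonal, Finset.mem_range] at hkl
    obtain ⟨m, hm, rfl⟩ := hkl
    simp only [Finset.mem_product, Finset.mem_range]
    omega
  rw [map_sum, map_sum, Finset.sum_subset hsub]
  intro kl hkl hkl2
  simp only [Finset.mem_product, Finset.mem_range] at hkl
  simp only [Finset.mem_biUnion, Finset.HasAntidiagonal.mem_antidiagonal, Finset.mem_range] at hkl2
  have : N ≤ kl.1 + kl.2 := by
    by_contra h
    exact hkl2 ⟨kl.1 + kl.2, by omega, rfl⟩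
  rw [MvPowerSeries.coeff_C_mul, coeff_pow_zero hg (by omega), mul_zero]

lemma constantCoeff_mvSubst (Q : PowerSeries ℂ) (g : R) :
    @MvPowerSeries.constantCoeff (Fin n) ℂ _ (mvSubst Q g) = @PowerSeries.constantCoeff ℂ _ Q := by
  have : @MvPowerSeries.coeff (Fin n) ℂ _ (0 : Fin n →₀ ℕ) (mvSubst Q g)
      = @PowerSeries.coeff ℂ _ 0 Q := by
    rw [coeff_mvSubst]
    simp
  simpa [MvPowerSeries.coeff_zero_eq_constantCoeff, PowerSeries.coeff_zero_eq_constantCoeff]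
    using this

end MvSubstPart

section ExpPart

lemma coeff_expAX (a : ℂ) (m : ℕ) :
    @PowerSeries.coeff ℂ _ m (expAX a) = a ^ m / m.factorial := by
  simp [expAX]

lemma expAX_eq (a : ℂ) : expAX a = PowerSeries.rescale a (PowerSeries.exp ℂ) := by
  ext m
  rw [coeff_expAX, PowerSeries.coeff_rescale, PowerSeries.coeff_exp]
  push_cast
  ring

lemma expAX_mul (a b : ℂ) : expAX a * expAX b = expAX (a + b) := by
  rw [expAX_eq, expAX_eq, expAX_eq, PowerSeries.exp_mul_exp_eq_exp_add]

lemma expAX_zero : expAX 0 = 1 := by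
  ext m
  rw [coeff_expAX]
  rcases Nat.eq_zero_or_pos m with h | h
  · subst h; simp
  · rw [PowerSeries.coeff_one, if_neg (by omega), zero_pow (by omega), zero_div]

lemma constantCoeff_expAX (a : ℂ) : @PowerSeries.constantCoeff ℂ _ (expAX a) = 1 := by
  have := coeff_expAX a 0
  simpa using this

end ExpPart

section EPart
variable {n : ℕ}
local notation "R" => MvPowerSeries (Fin n) ℂ
noncomputable def E (c : ℂ) (i : Fin n) : R := mvSubst (expAX c) (MvPowerSeries.X i)

lemma degree_single (i : Fin n) (k : ℕ) : (Finsupp.single i k).degree = k := by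
  classical
  rcases Nat.eq_zero_or_pos k with h | h
  · subst h; simp
  · rw [Finsupp.degree_single]

lemma pair_apply_fst {i j : Fin n} (hij : j ≠ i) (k l : ℕ) :
    (Finsupp.single j k + Finsupp.single i l) j = k := by
  rw [Finsupp.add_apply, Finsupp.single_eq_same,
    Finsupp.single_eq_of_ne' (fun hc => hij hc.symm), add_zero]

lemma pair_apply_snd {i j : Fin n} (hij : j ≠ i) (k l : ℕ) :
    (Finsupp.single j k + Finsupp.single i l) i = l := by
  rw [Finsupp.add_apply, Finsupp.single_eq_same, Finsupp.single_eq_of_ne' hij, zero_add]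

lemma coeff_E (c : ℂ) (i : Fin n) (d : Fin n →₀ ℕ) :
    @MvPowerSeries.coeff (Fin n) ℂ _ d (E c i) =
      if d = Finsupp.single i (d i) then c ^ (d i) / (d i).factorial else 0 := by
  classical
  rw [E, coeff_mvSubst]
  rw [Finset.sum_eq_single (d i)]
  · rw [coeff_expAX, MvPowerSeries.coeff_X_pow]
    split_ifs with h
    · rw [mul_one]
    · rw [mul_zero]
  · intro m _ hm
    rw [MvPowerSeries.coeff_X_pow, if_neg, mul_zero]
    intro h
    apply hm
    rw [h, Finsupp.single_eq_same]
  · intro h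
    exfalso
    apply h
    rw [Finset.mem_range, degree_eq_sum]
    have := Finsupp.le_degree i d
    omega

lemma E_mul_E (c c' : ℂ) (i : Fin n) : E c i * E c' i = E (c + c') i := by
  rw [E, E, E, ← mvSubst_mul (by simp), expAX_mul]

lemma E_zero (i : Fin n) : E 0 i = 1 := by
  rw [E, expAX_zero]
  have : (1 : PowerSeries ℂ) = @PowerSeries.C ℂ _ 1 := by simp
  rw [this, mvSubst_C, map_one]

lemma E_mul_E_neg (c : ℂ) (i : Fin n) : E c i * E (-c) i = 1 := by
  rw [E_mul_E, add_neg_cancel, E_zero]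

lemma constantCoeff_E (c : ℂ) (i : Fin n) :
    @MvPowerSeries.constantCoeff (Fin n) ℂ _ (E c i) = 1 := by
  have := coeff_E c i 0
  simp only [Finsupp.coe_zero, Pi.zero_apply, Finsupp.single_zero, if_pos rfl] at this
  rw [← MvPowerSeries.coeff_zero_eq_constantCoeff]
  simpa using this

lemma scalar_id (c : ℂ) (p q : ℕ) :
    c ^ (p + q) / ((p + q).factorial : ℂ) * ((-1 : ℂ) ^ q * ((p + q).choose p : ℂ))
      = c ^ p / (p.factorial : ℂ) * ((-c) ^ q / (q.factorial : ℂ)) := by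
  have h1 : ((p + q).choose p : ℂ) * ((p.factorial : ℂ) * (q.factorial : ℂ))
      = ((p + q).factorial : ℂ) := by
    have h0 : (p + q).choose p * p.factorial * q.factorial = (p + q).factorial := by
      have := Nat.add_choose_mul_factorial_mul_factorial q p
      rw [Nat.add_comm q p] at this
      rw [← this]
      ring
    exact_mod_cast congrArg (Nat.cast : ℕ → ℂ) (by rw [← mul_assoc]; exact h0)
  have hp : (p.factorial : ℂ) ≠ 0 := Nat.cast_ne_zero.mpr p.factorial_ne_zero
  have hq : (q.factorial : ℂ) ≠ 0 := Nat.cast_ne_zero.mpr q.factorial_ne_zero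
  have hpq : ((p + q).factorial : ℂ) ≠ 0 := Nat.cast_ne_zero.mpr (p + q).factorial_ne_zero
  rw [neg_pow, pow_add]
  field_simp
  linear_combination c ^ p * c ^ q * (-1 : ℂ) ^ q * h1

/-- Key lemma L1: substitution of `expAX c` into `X j - X i` factors as a product. -/
lemma mvSubst_expAX_sub {i j : Fin n} (hij : j ≠ i) (c : ℂ) :
    mvSubst (expAX c) (MvPowerSeries.X j - MvPowerSeries.X i) = E c j * E (-c) i := by
  classical
  ext d
  have coeff_pow : ∀ m : ℕ,
      @MvPowerSeries.coeff (Fin n) ℂ _ d ((MvPowerSeries.X j - MvPowerSeries.X i : R) ^ m)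
      = ∑ k ∈ Finset.range (m + 1),
          (if d = Finsupp.single j k + Finsupp.single i (m - k) then
            ((-1 : ℂ) ^ (m - k) * ((m).choose k : ℂ)) else 0) := by
    intro m
    rw [sub_eq_add_neg, add_pow, map_sum]
    apply Finset.sum_congr rfl
    intro k _
    rw [neg_pow]
    have e1 : ((MvPowerSeries.X j : R) ^ k * ((-1 : R) ^ (m - k) * (MvPowerSeries.X i : R) ^ (m - k)) * ((m).choose k : R))
        = (((-1 : ℂ) ^ (m - k) * ((m).choose k : ℂ))) •
          (@MvPowerSeries.monomial (Fin n) ℂ _ (Finsupp.single j k) (1 : ℂ) *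
            @MvPowerSeries.monomial (Fin n) ℂ _ (Finsupp.single i (m - k)) (1 : ℂ)) := by
      rw [MvPowerSeries.X_pow_eq, MvPowerSeries.X_pow_eq, MvPowerSeries.smul_eq_C_mul]
      have hneg : ((-1 : R) ^ (m - k)) = @MvPowerSeries.C (Fin n) ℂ _ ((-1 : ℂ) ^ (m - k)) := by
        rw [map_pow, map_neg, map_one]
      have hch : (((m).choose k : ℕ) : R) = @MvPowerSeries.C (Fin n) ℂ _ (((m).choose k : ℕ) : ℂ) := by
        rw [map_natCast]
      rw [hneg, hch, map_mul]
      ring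
    rw [e1, MvPowerSeries.monomial_mul_monomial, one_mul, LinearMap.map_smul,
      MvPowerSeries.coeff_monomial, smul_eq_mul]
    split_ifs with h
    · rw [mul_one]
    · rw [mul_zero]
  by_cases h : d = Finsupp.single j (d j) + Finsupp.single i (d i)
  · have hdeg : d.degree = d j + d i := by
      conv_lhs => rw [h]
      rw [degree_add, degree_single, degree_single]
    -- LHS
    have lhs_eq : @MvPowerSeries.coeff (Fin n) ℂ _ d
        (mvSubst (expAX c) (MvPowerSeries.X j - MvPowerSeries.X i)) =
        c ^ (d j) / ((d j).factorial : ℂ) * ((-c) ^ (d i) / ((d i).factorial : ℂ)) := by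
      rw [coeff_mvSubst, degree_eq_sum]
      rw [Finset.sum_eq_single (d j + d i)]
      · rw [coeff_pow, coeff_expAX]
        rw [Finset.sum_eq_single (d j)]
        · have hsub : d j + d i - d j = d i := by omega
          rw [hsub, if_pos h, ← scalar_id c (d j) (d i)]
        · intro k _ hk
          rw [if_neg]
          intro hd
          apply hk
          rw [hd] at h ⊢
          rw [pair_apply_fst hij]
        · intro hmem
          exfalso
          exact hmem (Finset.mem_range.mpr (by omega))
      · intro m _ hm
        rw [coeff_pow, Finset.sum_eq_zero, mul_zero]
        intro k hkmem
        rw [Finset.mem_range] at hkmem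
        rw [if_neg]
        intro hd
        apply hm
        have h1 : d j = k := by rw [hd, pair_apply_fst hij]
        have h2 : d i = m - k := by rw [hd, pair_apply_snd hij]
        omega
      · intro hmem
        exfalso
        exact hmem (Finset.mem_range.mpr (by omega))
    -- RHS
    have rhs_eq : @MvPowerSeries.coeff (Fin n) ℂ _ d (E c j * E (-c) i) =
        c ^ (d j) / ((d j).factorial : ℂ) * ((-c) ^ (d i) / ((d i).factorial : ℂ)) := by
      rw [MvPowerSeries.coeff_mul]
      rw [Finset.sum_eq_single (Finsupp.single j (d j), Finsupp.single i (d i))]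
      · rw [coeff_E, coeff_E]
        rw [if_pos (by rw [Finsupp.single_eq_same]), if_pos (by rw [Finsupp.single_eq_same]),
          Finsupp.single_eq_same, Finsupp.single_eq_same]
      · intro p hp hne
        rw [Finset.HasAntidiagonal.mem_antidiagonal] at hp
        rw [coeff_E, coeff_E]
        by_cases h1 : p.1 = Finsupp.single j (p.1 j)
        · by_cases h2 : p.2 = Finsupp.single i (p.2 i)
          · exfalso
            apply hne
            have hd : d = Finsupp.single j (p.1 j) + Finsupp.single i (p.2 i) := by
              rw [← hp, ← h1, ← h2]
            have e1 : p.1 j = d j := by rw [hd, pair_apply_fst hij]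
            have e2 : p.2 i = d i := by
              rw [hd, pair_apply_snd hij]
            have hthis : p = (Finsupp.single j (p.1 j), Finsupp.single i (p.2 i)) := by
              rw [← h1, ← h2]
            rw [← e1, ← e2]
            exact hthis
          · rw [if_neg h2, mul_zero]
        · rw [if_neg h1, zero_mul]
      · intro hmem
        exfalso
        apply hmem
        rw [Finset.HasAntidiagonal.mem_antidiagonal]
        exact h.symm
    rw [lhs_eq, rhs_eq]
  · -- both sides are zero
    have lhs_eq : @MvPowerSeries.coeff (Fin n) ℂ _ d
        (mvSubst (expAX c) (MvPowerSeries.X j - MvPowerSeries.X i)) = 0 := by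
      rw [coeff_mvSubst]
      apply Finset.sum_eq_zero
      intro m _
      rw [coeff_pow, Finset.sum_eq_zero, mul_zero]
      intro k _
      rw [if_neg]
      intro hd
      apply h
      have h1 : d j = k := by rw [hd, pair_apply_fst hij]
      have h2 : d i = m - k := by rw [hd, pair_apply_snd hij]
      rw [h1, h2]
      exact hd
    have rhs_eq : @MvPowerSeries.coeff (Fin n) ℂ _ d (E c j * E (-c) i) = 0 := by
      rw [MvPowerSeries.coeff_mul]
      apply Finset.sum_eq_zero
      intro p hp
      rw [Finset.HasAntidiagonal.mem_antidiagonal] at hp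
      rw [coeff_E, coeff_E]
      by_cases h1 : p.1 = Finsupp.single j (p.1 j)
      · by_cases h2 : p.2 = Finsupp.single i (p.2 i)
        · exfalso
          apply h
          have hd : d = Finsupp.single j (p.1 j) + Finsupp.single i (p.2 i) := by
            rw [← hp, ← h1, ← h2]
          have e1 : p.1 j = d j := by rw [hd, pair_apply_fst hij]
          have e2 : p.2 i = d i := by rw [hd, pair_apply_snd hij]
          rw [← e1, ← e2]
          exact hd
        · rw [if_neg h2, mul_zero]
      · rw [if_neg h1, zero_mul]
    rw [lhs_eq, rhs_eq]

end EPart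

section FieldPart

open Polynomial Finset

variable {F : Type*} [Field F]

lemma natDegree_linear_prod {ι : Type*} (s : Finset ι) (x : ι → F) (y : F) :
    (∏ i ∈ s, (Polynomial.C (x i) + Polynomial.C y * Polynomial.X)).natDegree ≤ s.card := by
  apply le_trans (Polynomial.natDegree_prod_le _ _)
  calc ∑ i ∈ s, (Polynomial.C (x i) + Polynomial.C y * Polynomial.X).natDegree
      ≤ ∑ _i ∈ s, 1 := by
        apply Finset.sum_le_sum
        intro i _
        apply le_trans (Polynomial.natDegree_add_le _ _)
        simp [Polynomial.natDegree_C_mul_le, max_le_iff]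
        exact le_trans (Polynomial.natDegree_mul_le) (by simp)
    _ = s.card := by simp

lemma coeff_linear_prod {ι : Type*} (s : Finset ι) (x : ι → F) (y : F) :
    (∏ i ∈ s, (Polynomial.C (x i) + Polynomial.C y * Polynomial.X)).coeff s.card
      = y ^ s.card := by
  classical
  induction s using Finset.induction_on with
  | empty => simp
  | @insert a s ha ih =>
    rw [Finset.prod_insert ha, Finset.card_insert_of_notMem ha]
    rw [add_mul, Polynomial.coeff_add, Polynomial.coeff_C_mul]
    have h1 : (∏ i ∈ s, (Polynomial.C (x i) + Polynomial.C y * Polynomial.X)).coeff (s.card + 1)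
        = 0 := by
      apply Polynomial.coeff_eq_zero_of_natDegree_lt
      exact lt_of_le_of_lt (natDegree_linear_prod s x y) (by omega)
    rw [h1, mul_zero, zero_add, mul_assoc, Polynomial.coeff_C_mul, Polynomial.coeff_X_mul, ih]
    ring

lemma leadingCoeff_lagrange_basis {ι : Type*} [DecidableEq ι] {s : Finset ι} {v : ι → F}
    (hvs : Set.InjOn v s) {i : ι} (hi : i ∈ s) :
    (Lagrange.basis s v i).coeff (s.card - 1) = Lagrange.nodalWeight s v i := by
  have hdeg : (Lagrange.basis s v i).degree = (s.card - 1 : ℕ) := Lagrange.degree_basis hvs hi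
  have hnat : (Lagrange.basis s v i).natDegree = s.card - 1 :=
    Polynomial.natDegree_eq_of_degree_eq_some hdeg
  rw [← hnat, ← Polynomial.leadingCoeff]
  rw [Lagrange.basis, Polynomial.leadingCoeff_prod]
  rw [Lagrange.nodalWeight]
  apply Finset.prod_congr rfl
  intro j hj
  have hij : v i ≠ v j := by
    rcases Finset.mem_erase.mp hj with ⟨hji, hjs⟩
    exact fun hc => hji ((hvs.eq_iff hjs hi).mp hc.symm)
  rw [Lagrange.basisDivisor, Polynomial.leadingCoeff_mul, Polynomial.leadingCoeff_C,
    (Polynomial.monic_X_sub_C (v j)).leadingCoeff, mul_one]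

lemma lagrange_coeff_top {ι : Type*} [DecidableEq ι] (s : Finset ι) (v : ι → F)
    (hvs : Set.InjOn v s) (f : F[X]) (hdeg : f.degree < s.card) :
    f.coeff (s.card - 1) = ∑ i ∈ s, f.eval (v i) * Lagrange.nodalWeight s v i := by
  conv_lhs => rw [Lagrange.eq_interpolate hvs hdeg]
  rw [Lagrange.interpolate_apply, Polynomial.finset_sum_coeff]
  apply Finset.sum_congr rfl
  intro i hi
  rw [Polynomial.coeff_C_mul, leadingCoeff_lagrange_basis hvs hi]

/-- The key residue/partial-fraction identity. -/
lemma key_sum {n : ℕ} (hn : 1 ≤ n) (a b : F) (hab : a ≠ b) (w : Fin n → F)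
    (hw : Function.Injective w) (hw0 : ∀ i, w i ≠ 0) :
    ∑ i : Fin n, (∏ j ∈ Finset.univ.erase i, (a * w j - b * w i)) *
        ∏ j ∈ Finset.univ.erase i, (w i - w j)⁻¹
      = (-1 : F) ^ (n - 1) * (a ^ n - b ^ n) / (a - b) := by
  classical
  set v : Option (Fin n) → F := fun o => o.elim 0 w with hv
  have hvs : Set.InjOn v (Finset.univ : Finset (Option (Fin n))) := by
    intro o1 _ o2 _ h
    match o1, o2 with
    | none, none => rfl
    | none, some j => exact absurd h.symm (hw0 j)
    | some j, none => exact absurd h (hw0 j)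
    | some j, some k => exact congrArg some (hw h)
  set f : F[X] := ∏ j : Fin n, (Polynomial.C (a * w j) + Polynomial.C (-b) * Polynomial.X)
    with hf
  have hcard : (Finset.univ : Finset (Option (Fin n))).card = n + 1 := by
    simp [Finset.card_univ]
  have hdeg : f.degree < ((Finset.univ : Finset (Option (Fin n))).card : ℕ) := by
    rw [hcard]
    apply lt_of_le_of_lt Polynomial.degree_le_natDegree
    have := natDegree_linear_prod (Finset.univ : Finset (Fin n)) (fun j => a * w j) (-b)
    rw [Finset.card_univ, Fintype.card_fin] at this
    exact_mod_cast lt_of_le_of_lt (Nat.cast_le.mpr this) (by exact_mod_cast Nat.lt_succ_self n)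
  have htop : f.coeff n = (-b) ^ n := by
    have := coeff_linear_prod (Finset.univ : Finset (Fin n)) (fun j => a * w j) (-b)
    rwa [Finset.card_univ, Fintype.card_fin] at this
  have hmain := lagrange_coeff_top (Finset.univ : Finset (Option (Fin n))) v hvs f hdeg
  rw [hcard] at hmain
  simp only [Nat.add_sub_cancel] at hmain
  rw [htop] at hmain
  -- evaluate the sum over Option
  rw [_root_.univ_option, Finset.sum_insertNone] at hmain
  have hnone : v none = 0 := rfl
  have hsome : ∀ i : Fin n, v (some i) = w i := fun _ => rfl
  simp only [hnone, hsome] at hmain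
  have hevalprod : ∀ x : F, Polynomial.eval x f = ∏ j : Fin n, (a * w j - b * x) := by
    intro x
    rw [hf, Polynomial.eval_prod]
    apply Finset.prod_congr rfl
    intro j _
    simp only [Polynomial.eval_add, Polynomial.eval_C, Polynomial.eval_mul, Polynomial.eval_X]
    ring
  have t0 : Polynomial.eval (0 : F) f *
      Lagrange.nodalWeight (Finset.insertNone Finset.univ) v none = (-a) ^ n := by
    have h1 : (Finset.insertNone (Finset.univ : Finset (Fin n))).erase none
        = Finset.univ.map Function.Embedding.some := by
      ext o
      cases o <;> simp
    rw [Lagrange.nodalWeight, h1, Finset.prod_map]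
    rw [hevalprod, ← Finset.prod_mul_distrib]
    have : ∀ j : Fin n, (a * w j - b * 0) * (v none - v (Function.Embedding.some j))⁻¹
        = -a := by
      intro j
      rw [hnone]
      have : v (Function.Embedding.some j) = w j := rfl
      rw [this, mul_zero, sub_zero, zero_sub, inv_neg, mul_neg, mul_assoc,
        mul_inv_cancel₀ (hw0 j), mul_one]
    rw [Finset.prod_congr rfl (fun j _ => this j), Finset.prod_const, Finset.card_univ,
      Fintype.card_fin]
  have ti : ∀ i : Fin n, Polynomial.eval (w i) f *
      Lagrange.nodalWeight (Finset.insertNone Finset.univ) v (some i)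
      = (a - b) * ((∏ j ∈ Finset.univ.erase i, (a * w j - b * w i)) *
          ∏ j ∈ Finset.univ.erase i, (w i - w j)⁻¹) := by
    intro i
    have h1 : (Finset.insertNone (Finset.univ : Finset (Fin n))).erase (some i)
        = Finset.insertNone (Finset.univ.erase i) := by
      ext o
      cases o <;> simp [eq_comm]
    rw [Lagrange.nodalWeight, h1, Finset.prod_insertNone]
    simp only [hsome, hnone, sub_zero]
    have h2 : Polynomial.eval (w i) f = (a * w i - b * w i) *
        ∏ j ∈ Finset.univ.erase i, (a * w j - b * w i) := by
      rw [hevalprod, ← Finset.mul_prod_erase Finset.univ _ (Finset.mem_univ i)]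
    rw [h2]
    have : (a * w i - b * w i) * ((w i)⁻¹) = a - b := by
      rw [← sub_mul, mul_assoc, mul_inv_cancel₀ (hw0 i), mul_one]
    calc (a * w i - b * w i) * (∏ j ∈ Finset.univ.erase i, (a * w j - b * w i)) *
          ((w i)⁻¹ * ∏ j ∈ Finset.univ.erase i, (w i - w j)⁻¹)
        = ((a * w i - b * w i) * (w i)⁻¹) * ((∏ j ∈ Finset.univ.erase i, (a * w j - b * w i)) *
            ∏ j ∈ Finset.univ.erase i, (w i - w j)⁻¹) := by ring
      _ = _ := by rw [this]
  rw [t0] at hmain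
  rw [Finset.sum_congr rfl (fun i _ => ti i), ← Finset.mul_sum] at hmain
  -- hmain : (-b)^n = (-a)^n + (a - b) * S
  obtain ⟨m, rfl⟩ : ∃ m, n = m + 1 := ⟨n - 1, by omega⟩
  rw [eq_div_iff (sub_ne_zero_of_ne hab)]
  simp only [Nat.add_sub_cancel]
  have hodd : (-a : F) ^ (m + 1) = -((-1 : F) ^ m * a ^ (m + 1)) := by
    rw [neg_pow, pow_succ (-1 : F)]
    ring
  have hoddb : (-b : F) ^ (m + 1) = -((-1 : F) ^ m * b ^ (m + 1)) := by
    rw [neg_pow, pow_succ (-1 : F)]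
    ring
  rw [hodd, hoddb] at hmain
  linear_combination -hmain

end FieldPart

section PairsPart

open Finset

variable {n : ℕ} {M : Type*} [CommMonoid M]

lemma prod_pairs (f : Fin n × Fin n → M) :
    ∏ p ∈ Finset.univ.filter (fun p : Fin n × Fin n => p.1 ≠ p.2), f p
      = ∏ k : Fin n, ∏ j ∈ Finset.univ.erase k, f (k, j) := by
  calc ∏ p ∈ Finset.univ.filter (fun p : Fin n × Fin n => p.1 ≠ p.2), f p
      = ∏ x ∈ (Finset.univ.sigma fun k : Fin n => Finset.univ.erase k), f (x.1, x.2) := ?_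
    _ = ∏ k : Fin n, ∏ j ∈ Finset.univ.erase k, f (k, j) := Finset.prod_sigma _ _ _
  symm
  apply Finset.prod_bij (fun x _ => (x.1, x.2))
  · rintro ⟨k, j⟩ hx
    simp only [Finset.mem_sigma, Finset.mem_univ, Finset.mem_erase, true_and, and_true] at hx
    simp only [Finset.mem_filter, Finset.mem_univ, true_and]
    exact fun h => hx h.symm
  · rintro ⟨k, j⟩ h1 ⟨k', j'⟩ h2 h
    simpa [Sigma.mk.inj_iff, Prod.ext_iff] using h
  · rintro ⟨k, j⟩ hp
    simp only [Finset.mem_filter, Finset.mem_univ, true_and] at hp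
    exact ⟨⟨k, j⟩, by simp [Ne.symm hp], rfl⟩
  · intros; rfl

lemma prod_pairsNe (i : Fin n) (f : Fin n × Fin n → M) :
    ∏ p ∈ Finset.univ.filter (fun p : Fin n × Fin n => p.1 ≠ p.2 ∧ p.1 ≠ i), f p
      = ∏ k ∈ Finset.univ.erase i, ∏ j ∈ Finset.univ.erase k, f (k, j) := by
  calc ∏ p ∈ Finset.univ.filter (fun p : Fin n × Fin n => p.1 ≠ p.2 ∧ p.1 ≠ i), f p
      = ∏ x ∈ ((Finset.univ.erase i).sigma fun k : Fin n => Finset.univ.erase k), f (x.1, x.2) := ?_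
    _ = ∏ k ∈ Finset.univ.erase i, ∏ j ∈ Finset.univ.erase k, f (k, j) := Finset.prod_sigma _ _ _
  symm
  apply Finset.prod_bij (fun x _ => (x.1, x.2))
  · rintro ⟨k, j⟩ hx
    simp only [Finset.mem_sigma, Finset.mem_erase, Finset.mem_univ, true_and, and_true] at hx
    simp only [Finset.mem_filter, Finset.mem_univ, true_and]
    exact ⟨fun h => hx.2 h.symm, hx.1⟩
  · rintro ⟨k, j⟩ h1 ⟨k', j'⟩ h2 h
    simpa [Sigma.mk.inj_iff, Prod.ext_iff] using h
  · rintro ⟨k, j⟩ hp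
    simp only [Finset.mem_filter, Finset.mem_univ, true_and] at hp
    exact ⟨⟨k, j⟩, by simp [Ne.symm hp.1, hp.2], rfl⟩
  · intros; rfl

/-- split the full pair product at a given first index -/
lemma prod_pairs_split (i : Fin n) (f : Fin n × Fin n → M) :
    ∏ p ∈ Finset.univ.filter (fun p : Fin n × Fin n => p.1 ≠ p.2), f p
      = (∏ j ∈ Finset.univ.erase i, f (i, j)) *
        ∏ p ∈ Finset.univ.filter (fun p : Fin n × Fin n => p.1 ≠ p.2 ∧ p.1 ≠ i), f p := by
  rw [prod_pairs, prod_pairsNe, ← Finset.mul_prod_erase Finset.univ _ (Finset.mem_univ i)]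

lemma prod_pairs_fst (A : Fin n → M) :
    ∏ p ∈ Finset.univ.filter (fun p : Fin n × Fin n => p.1 ≠ p.2), A p.1
      = (∏ k : Fin n, A k) ^ (n - 1) := by
  rw [prod_pairs, ← Finset.prod_pow]
  apply Finset.prod_congr rfl
  intro k _
  calc ∏ j ∈ Finset.univ.erase k, A (k, j).1
      = ∏ _j ∈ Finset.univ.erase k, A k := Finset.prod_congr rfl (fun j _ => rfl)
    _ = A k ^ (n - 1) := by
        rw [Finset.prod_const, Finset.card_erase_of_mem (Finset.mem_univ k), Finset.card_univ,
          Fintype.card_fin]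

lemma prod_pairs_snd (A : Fin n → M) :
    ∏ p ∈ Finset.univ.filter (fun p : Fin n × Fin n => p.1 ≠ p.2), A p.2
      = (∏ k : Fin n, A k) ^ (n - 1) := by
  rw [← prod_pairs_fst]
  apply Finset.prod_nbij' (fun p => (p.2, p.1)) (fun p => (p.2, p.1))
  · rintro ⟨k, j⟩ hp
    simp only [Finset.mem_filter, Finset.mem_univ, true_and] at hp ⊢
    exact Ne.symm hp
  · rintro ⟨k, j⟩ hp
    simp only [Finset.mem_filter, Finset.mem_univ, true_and] at hp ⊢
    exact Ne.symm hp
  · rintro ⟨k, j⟩ _; rfl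
  · rintro ⟨k, j⟩ _; rfl
  · rintro ⟨k, j⟩ _; rfl

end PairsPart

section HomogPart
variable {F : Type} [Field F] {n : ℕ}

lemma key_sum_cleared (hn : 1 ≤ n) (a b : F) (hab : a ≠ b) (w : Fin n → F)
    (hw : Function.Injective w) (hw0 : ∀ i, w i ≠ 0) :
    ∑ i : Fin n, (∏ j ∈ Finset.univ.erase i, (a * w j - b * w i)) *
        ∏ p ∈ Finset.univ.filter (fun p : Fin n × Fin n => p.1 ≠ p.2 ∧ p.1 ≠ i),
          (w p.1 - w p.2)
      = ((-1 : F) ^ (n - 1) * (a ^ n - b ^ n) / (a - b)) *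
        ∏ p ∈ Finset.univ.filter (fun p : Fin n × Fin n => p.1 ≠ p.2), (w p.1 - w p.2) := by
  have hsplit : ∀ i : Fin n,
      (∏ p ∈ Finset.univ.filter (fun p : Fin n × Fin n => p.1 ≠ p.2), (w p.1 - w p.2))
      = (∏ j ∈ Finset.univ.erase i, (w i - w j)) *
        ∏ p ∈ Finset.univ.filter (fun p : Fin n × Fin n => p.1 ≠ p.2 ∧ p.1 ≠ i),
          (w p.1 - w p.2) := fun i => prod_pairs_split i _
  have hDnz : ∀ i : Fin n, (∏ j ∈ Finset.univ.erase i, (w i - w j)) ≠ 0 := by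
    intro i
    apply Finset.prod_ne_zero_iff.mpr
    intro j hj
    exact sub_ne_zero_of_ne (fun hc => (Finset.mem_erase.mp hj).1 (hw hc.symm))
  have hterm : ∀ i : Fin n,
      (∏ j ∈ Finset.univ.erase i, (a * w j - b * w i)) *
        ∏ p ∈ Finset.univ.filter (fun p : Fin n × Fin n => p.1 ≠ p.2 ∧ p.1 ≠ i),
          (w p.1 - w p.2)
      = ((∏ j ∈ Finset.univ.erase i, (a * w j - b * w i)) *
          ∏ j ∈ Finset.univ.erase i, (w i - w j)⁻¹) *
        ∏ p ∈ Finset.univ.filter (fun p : Fin n × Fin n => p.1 ≠ p.2), (w p.1 - w p.2) := by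
    intro i
    rw [hsplit i, Finset.prod_inv_distrib]
    have hD := hDnz i
    field_simp
  rw [Finset.sum_congr rfl (fun i _ => hterm i), ← Finset.sum_mul, key_sum hn a b hab w hw hw0]

lemma key_sum_homog (hn : 1 ≤ n) (a b : F) (hab : a ≠ b) (U V : Fin n → F)
    (hU : ∀ l, U l ≠ 0) (hV : ∀ l, V l ≠ 0)
    (hM : ∀ j k : Fin n, j ≠ k → U j * V k - V j * U k ≠ 0) :
    ∑ i : Fin n, (∏ j ∈ Finset.univ.erase i, (a * (V j * U i) - b * (U j * V i))) *
        ∏ p ∈ Finset.univ.filter (fun p : Fin n × Fin n => p.1 ≠ p.2 ∧ p.1 ≠ i),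
          (U p.2 * V p.1 - V p.2 * U p.1)
      = ((-1 : F) ^ (n - 1) * (a ^ n - b ^ n) / (a - b)) *
        ∏ p ∈ Finset.univ.filter (fun p : Fin n × Fin n => p.1 ≠ p.2),
          (U p.2 * V p.1 - V p.2 * U p.1) := by
  classical
  set w : Fin n → F := fun l => V l / U l with hw
  have hw0 : ∀ l, w l ≠ 0 := fun l => div_ne_zero (hV l) (hU l)
  have hwinj : Function.Injective w := by
    intro j k h
    by_contra hjk
    apply hM j k hjk
    rw [hw] at h
    have h2 := (div_eq_div_iff (hU j) (hU k)).mp h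
    apply sub_eq_zero_of_eq
    linear_combination -h2
  have hfac : ∀ j i : Fin n, (U j * U i) * (a * w j - b * w i)
      = a * (V j * U i) - b * (U j * V i) := by
    intro j i
    have h1 := hU j
    have h2 := hU i
    rw [hw]
    field_simp
  have hfacM : ∀ p : Fin n × Fin n, (U p.2 * U p.1) * (w p.1 - w p.2)
      = U p.2 * V p.1 - V p.2 * U p.1 := by
    intro p
    have h1 := hU p.1
    have h2 := hU p.2
    rw [hw]
    field_simp
  set PAll : F := ∏ p ∈ Finset.univ.filter (fun p : Fin n × Fin n => p.1 ≠ p.2),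
    (U p.2 * U p.1) with hPAll
  have hsplitU : ∀ i : Fin n, PAll = (∏ j ∈ Finset.univ.erase i, (U j * U i)) *
      ∏ p ∈ Finset.univ.filter (fun p : Fin n × Fin n => p.1 ≠ p.2 ∧ p.1 ≠ i),
        (U p.2 * U p.1) := by
    intro i
    exact prod_pairs_split i (fun p => U p.2 * U p.1)
  have hLHSi : ∀ i : Fin n,
      (∏ j ∈ Finset.univ.erase i, (a * (V j * U i) - b * (U j * V i))) *
        ∏ p ∈ Finset.univ.filter (fun p : Fin n × Fin n => p.1 ≠ p.2 ∧ p.1 ≠ i),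
          (U p.2 * V p.1 - V p.2 * U p.1)
      = PAll * ((∏ j ∈ Finset.univ.erase i, (a * w j - b * w i)) *
          ∏ p ∈ Finset.univ.filter (fun p : Fin n × Fin n => p.1 ≠ p.2 ∧ p.1 ≠ i),
            (w p.1 - w p.2)) := by
    intro i
    have e1 : (∏ j ∈ Finset.univ.erase i, (a * (V j * U i) - b * (U j * V i)))
        = (∏ j ∈ Finset.univ.erase i, (U j * U i)) *
          ∏ j ∈ Finset.univ.erase i, (a * w j - b * w i) := by
      rw [← Finset.prod_mul_distrib]
      exact Finset.prod_congr rfl (fun j _ => (hfac j i).symm)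
    have e2 : (∏ p ∈ Finset.univ.filter (fun p : Fin n × Fin n => p.1 ≠ p.2 ∧ p.1 ≠ i),
          (U p.2 * V p.1 - V p.2 * U p.1))
        = (∏ p ∈ Finset.univ.filter (fun p : Fin n × Fin n => p.1 ≠ p.2 ∧ p.1 ≠ i),
            (U p.2 * U p.1)) *
          ∏ p ∈ Finset.univ.filter (fun p : Fin n × Fin n => p.1 ≠ p.2 ∧ p.1 ≠ i),
            (w p.1 - w p.2) := by
      rw [← Finset.prod_mul_distrib]
      exact Finset.prod_congr rfl (fun p _ => (hfacM p).symm)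
    rw [e1, e2, hsplitU i]
    ring
  have e3 : (∏ p ∈ Finset.univ.filter (fun p : Fin n × Fin n => p.1 ≠ p.2),
        (U p.2 * V p.1 - V p.2 * U p.1))
      = PAll * ∏ p ∈ Finset.univ.filter (fun p : Fin n × Fin n => p.1 ≠ p.2),
          (w p.1 - w p.2) := by
    rw [hPAll, ← Finset.prod_mul_distrib]
    exact Finset.prod_congr rfl (fun p _ => (hfacM p).symm)
  rw [Finset.sum_congr rfl (fun i _ => hLHSi i), ← Finset.mul_sum,
    key_sum_cleared hn a b hab w hwinj hw0, e3]
  ring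

end HomogPart

section IdentityPart
variable {n : ℕ}
local notation "R" => MvPowerSeries (Fin n) ℂ
lemma C_injective : Function.Injective (@MvPowerSeries.C (Fin n) ℂ _) := by
  intro x y h
  have := congrArg (@MvPowerSeries.constantCoeff (Fin n) ℂ _) h
  simpa using this

lemma E_ne_zero (c : ℂ) (i : Fin n) : E c i ≠ 0 := by
  intro h
  have := constantCoeff_E c i
  rw [h, map_zero] at this
  exact one_ne_zero this.symm

/-- the main multivariate identity, proven by passing to the fraction field -/
lemma mv_identity (hn : 1 ≤ n) (a b : ℂ) (hab : a ≠ b)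
    (hMne : ∀ k j : Fin n, j ≠ k → E a j * E b k - E b j * E a k ≠ 0) :
    ∑ i : Fin n,
        (∏ j ∈ Finset.univ.erase i,
          (@MvPowerSeries.C (Fin n) ℂ _ a * (E b j * E a i)
            - @MvPowerSeries.C (Fin n) ℂ _ b * (E a j * E b i))) *
        ∏ p ∈ Finset.univ.filter (fun p : Fin n × Fin n => p.1 ≠ p.2 ∧ p.1 ≠ i),
          (E a p.2 * E b p.1 - E b p.2 * E a p.1)
      = @MvPowerSeries.C (Fin n) ℂ _ ((-1 : ℂ) ^ (n - 1) * (a ^ n - b ^ n) / (a - b)) *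
        ∏ p ∈ Finset.univ.filter (fun p : Fin n × Fin n => p.1 ≠ p.2),
          (E a p.2 * E b p.1 - E b p.2 * E a p.1) := by
  classical
  haveI : IsDomain R := NoZeroDivisors.to_isDomain _
  set K := FractionRing R
  set φ : R →+* K := algebraMap R K with hφdef
  have hφ : Function.Injective φ := IsFractionRing.injective R K
  have hinj0 : ∀ x : R, x ≠ 0 → φ x ≠ 0 := by
    intro x hx h
    exact hx (hφ (by rw [h, map_zero]))
  apply hφ
  simp only [map_sum, map_prod, map_mul, map_sub]
  have hγ : φ (@MvPowerSeries.C (Fin n) ℂ _ ((-1 : ℂ) ^ (n - 1) * (a ^ n - b ^ n) / (a - b)))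
      = (-1 : K) ^ (n - 1) * (φ (@MvPowerSeries.C (Fin n) ℂ _ a) ^ n
          - φ (@MvPowerSeries.C (Fin n) ℂ _ b) ^ n) /
        (φ (@MvPowerSeries.C (Fin n) ℂ _ a) - φ (@MvPowerSeries.C (Fin n) ℂ _ b)) := by
    have hCab : φ (@MvPowerSeries.C (Fin n) ℂ _ a) ≠ φ (@MvPowerSeries.C (Fin n) ℂ _ b) := by
      intro h
      exact hab (C_injective (hφ h))
    rw [eq_div_iff (sub_ne_zero_of_ne hCab)]
    have hc : ((-1 : ℂ) ^ (n - 1) * (a ^ n - b ^ n) / (a - b)) * (a - b)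
        = (-1 : ℂ) ^ (n - 1) * (a ^ n - b ^ n) :=
      div_mul_cancel₀ _ (sub_ne_zero_of_ne hab)
    calc φ (@MvPowerSeries.C (Fin n) ℂ _ ((-1 : ℂ) ^ (n - 1) * (a ^ n - b ^ n) / (a - b))) *
          (φ (@MvPowerSeries.C (Fin n) ℂ _ a) - φ (@MvPowerSeries.C (Fin n) ℂ _ b))
        = φ (@MvPowerSeries.C (Fin n) ℂ _
            ((-1 : ℂ) ^ (n - 1) * (a ^ n - b ^ n) / (a - b) * (a - b))) := by
          simp only [map_mul, map_sub]
      _ = φ (@MvPowerSeries.C (Fin n) ℂ _ ((-1 : ℂ) ^ (n - 1) * (a ^ n - b ^ n))) := by rw [hc]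
      _ = (-1 : K) ^ (n - 1) * (φ (@MvPowerSeries.C (Fin n) ℂ _ a) ^ n
            - φ (@MvPowerSeries.C (Fin n) ℂ _ b) ^ n) := by
          simp only [map_mul, map_sub, map_pow, map_neg, map_one]
  rw [hγ]
  exact key_sum_homog hn (φ (@MvPowerSeries.C (Fin n) ℂ _ a)) (φ (@MvPowerSeries.C (Fin n) ℂ _ b))
    (fun h => hab (C_injective (hφ h)))
    (fun l => φ (E a l)) (fun l => φ (E b l))
    (fun l => hinj0 _ (E_ne_zero a l)) (fun l => hinj0 _ (E_ne_zero b l))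
    (fun j k hjk => by
      have : φ (E a j * E b k - E b j * E a k) ≠ 0 := hinj0 _ (hMne k j hjk)
      rwa [map_sub, map_mul, map_mul] at this)

end IdentityPart

section AssemblyPart
variable {n : ℕ}
local notation "R" => MvPowerSeries (Fin n) ℂ
lemma E_neg_mul_E (c : ℂ) (i : Fin n) : E (-c) i * E c i = 1 := by
  rw [E_mul_E, neg_add_cancel, E_zero]

lemma ne_zero_of_cc {x : R} (h : @MvPowerSeries.constantCoeff (Fin n) ℂ _ x ≠ 0) : x ≠ 0 := by
  intro hx
  rw [hx, map_zero] at h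
  exact h rfl

lemma X_sub_ne_zero {j k : Fin n} (hjk : j ≠ k) :
    (MvPowerSeries.X j - MvPowerSeries.X k : R) ≠ 0 := by
  classical
  intro h
  have := congrArg (@MvPowerSeries.coeff (Fin n) ℂ _ (Finsupp.single j 1)) h
  rw [map_sub, MvPowerSeries.coeff_X, MvPowerSeries.coeff_X, if_pos rfl, if_neg, map_zero] at this
  · simp at this
  · intro hc
    exact hjk ((Finsupp.single_left_inj one_ne_zero).mp hc)

lemma cc_X_sub (j k : Fin n) :
    @MvPowerSeries.constantCoeff (Fin n) ℂ _ (MvPowerSeries.X j - MvPowerSeries.X k) = 0 := by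
  rw [map_sub, MvPowerSeries.constantCoeff_X, MvPowerSeries.constantCoeff_X, sub_zero]

/-- the main lemma: any `Q` with `Q * V = G1` where `X * V = F1` satisfies the equation -/
lemma hirzebruch_of_QV (hn : 2 ≤ n) (a b : ℂ) (hab : a ≠ b) (Q V : PowerSeries ℂ)
    (hFV : expAX a - expAX b = PowerSeries.X * V)
    (hQV : Q * V = @PowerSeries.C ℂ _ a * expAX b - @PowerSeries.C ℂ _ b * expAX a) :
    HirzebruchSeriesEq n ((-1 : ℂ) ^ (n - 1) * (a ^ n - b ^ n) / (a - b)) Q := by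
  classical
  have hV0 : @PowerSeries.constantCoeff ℂ _ V = a - b := by
    have h1 : @PowerSeries.coeff ℂ _ 1 (expAX a - expAX b) = a - b := by
      rw [map_sub, coeff_expAX, coeff_expAX]
      simp
    rw [hFV] at h1
    have h2 := PowerSeries.coeff_succ_X_mul 0 V
    rw [show (0 + 1 : ℕ) = 1 from rfl] at h2
    rw [h2] at h1
    rwa [PowerSeries.coeff_zero_eq_constantCoeff] at h1
  -- substituted per-factor lemmas
  have hNfac : ∀ i j : Fin n, j ≠ i →
      mvSubst Q (MvPowerSeries.X j - MvPowerSeries.X i) *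
        mvSubst V (MvPowerSeries.X j - MvPowerSeries.X i) * (E a i * E b i)
      = @MvPowerSeries.C (Fin n) ℂ _ a * (E b j * E a i)
          - @MvPowerSeries.C (Fin n) ℂ _ b * (E a j * E b i) := by
    intro i j hji
    have h1 : mvSubst Q (MvPowerSeries.X j - MvPowerSeries.X i) *
        mvSubst V (MvPowerSeries.X j - MvPowerSeries.X i)
        = mvSubst (@PowerSeries.C ℂ _ a * expAX b - @PowerSeries.C ℂ _ b * expAX a)
            (MvPowerSeries.X j - MvPowerSeries.X i) := by
      rw [← mvSubst_mul (cc_X_sub j i), hQV]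
    have h2 : mvSubst (@PowerSeries.C ℂ _ a * expAX b - @PowerSeries.C ℂ _ b * expAX a)
        (MvPowerSeries.X j - MvPowerSeries.X i)
        = @MvPowerSeries.C (Fin n) ℂ _ a * (E b j * E (-b) i)
          - @MvPowerSeries.C (Fin n) ℂ _ b * (E a j * E (-a) i) := by
      rw [mvSubst_sub, mvSubst_mul (cc_X_sub j i), mvSubst_mul (cc_X_sub j i),
        mvSubst_C, mvSubst_C, mvSubst_expAX_sub hji, mvSubst_expAX_sub hji]
    calc mvSubst Q (MvPowerSeries.X j - MvPowerSeries.X i) *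
          mvSubst V (MvPowerSeries.X j - MvPowerSeries.X i) * (E a i * E b i)
        = (@MvPowerSeries.C (Fin n) ℂ _ a * (E b j * E (-b) i)
            - @MvPowerSeries.C (Fin n) ℂ _ b * (E a j * E (-a) i)) * (E a i * E b i) := by
          rw [h1, h2]
      _ = @MvPowerSeries.C (Fin n) ℂ _ a * (E b j * E a i) * (E (-b) i * E b i)
            - @MvPowerSeries.C (Fin n) ℂ _ b * (E a j * E b i) * (E (-a) i * E a i) := by ring
      _ = _ := by rw [E_neg_mul_E, E_neg_mul_E, mul_one, mul_one]
  have hMfac : ∀ p : Fin n × Fin n, p.1 ≠ p.2 →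
      (MvPowerSeries.X p.2 - MvPowerSeries.X p.1) *
        mvSubst V (MvPowerSeries.X p.2 - MvPowerSeries.X p.1) * (E a p.1 * E b p.1)
      = E a p.2 * E b p.1 - E b p.2 * E a p.1 := by
    rintro ⟨k, j⟩ hp
    simp only [ne_eq] at hp
    have hjk : j ≠ k := fun h => hp h.symm
    have h1 : mvSubst (expAX a - expAX b) (MvPowerSeries.X j - MvPowerSeries.X k)
        = (MvPowerSeries.X j - MvPowerSeries.X k : R) *
          mvSubst V (MvPowerSeries.X j - MvPowerSeries.X k) := by
      rw [hFV, mvSubst_mul (cc_X_sub j k), mvSubst_X (cc_X_sub j k)]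
    have h2 : mvSubst (expAX a - expAX b) (MvPowerSeries.X j - MvPowerSeries.X k)
        = E a j * E (-a) k - E b j * E (-b) k := by
      rw [mvSubst_sub, mvSubst_expAX_sub hjk, mvSubst_expAX_sub hjk]
    show (MvPowerSeries.X j - MvPowerSeries.X k : R) *
        mvSubst V (MvPowerSeries.X j - MvPowerSeries.X k) * (E a k * E b k)
      = E a j * E b k - E b j * E a k
    calc (MvPowerSeries.X j - MvPowerSeries.X k : R) *
          mvSubst V (MvPowerSeries.X j - MvPowerSeries.X k) * (E a k * E b k)
        = (E a j * E (-a) k - E b j * E (-b) k) * (E a k * E b k) := by rw [← h1, h2]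
      _ = E a j * E b k * (E (-a) k * E a k) - E b j * E a k * (E (-b) k * E b k) := by ring
      _ = _ := by rw [E_neg_mul_E, E_neg_mul_E, mul_one, mul_one]
  -- nonvanishing
  have hsVne : ∀ p : Fin n × Fin n,
      mvSubst V (MvPowerSeries.X p.2 - MvPowerSeries.X p.1) ≠ 0 := by
    intro p
    apply ne_zero_of_cc
    rw [constantCoeff_mvSubst, hV0]
    exact sub_ne_zero_of_ne hab
  have hEEne : ∀ l : Fin n, (E a l * E b l : R) ≠ 0 := by
    intro l
    apply ne_zero_of_cc
    rw [map_mul, constantCoeff_E, constantCoeff_E, mul_one]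
    exact one_ne_zero
  have hMne : ∀ k j : Fin n, j ≠ k → E a j * E b k - E b j * E a k ≠ 0 := by
    intro k j hjk
    rw [← hMfac (k, j) (fun h => hjk h.symm)]
    exact mul_ne_zero (mul_ne_zero (X_sub_ne_zero hjk) (hsVne (k, j))) (hEEne k)
  -- the multiplier
  set Z1 : R := ∏ p ∈ Finset.univ.filter (fun p : Fin n × Fin n => p.1 ≠ p.2),
    mvSubst V (MvPowerSeries.X p.2 - MvPowerSeries.X p.1) with hZ1
  set Z2 : R := ∏ p ∈ Finset.univ.filter (fun p : Fin n × Fin n => p.1 ≠ p.2),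
    (E a p.1 * E b p.1) with hZ2
  have hZne : Z1 * Z2 ≠ 0 := by
    apply mul_ne_zero
    · rw [hZ1]
      rw [Finset.prod_ne_zero_iff]
      exact fun p _ => hsVne p
    · rw [hZ2]
      rw [Finset.prod_ne_zero_iff]
      exact fun p _ => hEEne p.1
  rw [HirzebruchSeriesEq]
  apply mul_right_cancel₀ hZne
  -- LHS transformation
  have hterm : ∀ i : Fin n,
      ((∏ j ∈ Finset.univ.erase i,
          mvSubst Q (MvPowerSeries.X j - MvPowerSeries.X i)) *
        ∏ p ∈ Finset.univ.filter (fun p : Fin n × Fin n => p.1 ≠ p.2 ∧ p.1 ≠ i),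
          (MvPowerSeries.X p.2 - MvPowerSeries.X p.1)) * (Z1 * Z2)
      = (∏ j ∈ Finset.univ.erase i,
          (@MvPowerSeries.C (Fin n) ℂ _ a * (E b j * E a i)
            - @MvPowerSeries.C (Fin n) ℂ _ b * (E a j * E b i))) *
        ∏ p ∈ Finset.univ.filter (fun p : Fin n × Fin n => p.1 ≠ p.2 ∧ p.1 ≠ i),
          (E a p.2 * E b p.1 - E b p.2 * E a p.1) := by
    intro i
    have e1 : Z1 = (∏ j ∈ Finset.univ.erase i,
        mvSubst V (MvPowerSeries.X j - MvPowerSeries.X i)) *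
        ∏ p ∈ Finset.univ.filter (fun p : Fin n × Fin n => p.1 ≠ p.2 ∧ p.1 ≠ i),
          mvSubst V (MvPowerSeries.X p.2 - MvPowerSeries.X p.1) :=
      prod_pairs_split i _
    have e2 : Z2 = (∏ _j ∈ Finset.univ.erase i, (E a i * E b i)) *
        ∏ p ∈ Finset.univ.filter (fun p : Fin n × Fin n => p.1 ≠ p.2 ∧ p.1 ≠ i),
          (E a p.1 * E b p.1) :=
      prod_pairs_split i _
    rw [e1, e2]
    have hgroup : ∀ A1 A2 B1 B2 C1 C2 : R,
        (A1 * A2) * ((B1 * B2) * (C1 * C2)) = (A1 * B1 * C1) * (A2 * B2 * C2) := by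
      intros; ring
    rw [hgroup]
    congr 1
    · rw [← Finset.prod_mul_distrib, ← Finset.prod_mul_distrib]
      apply Finset.prod_congr rfl
      intro j hj
      exact hNfac i j (Finset.mem_erase.mp hj).1
    · rw [← Finset.prod_mul_distrib, ← Finset.prod_mul_distrib]
      apply Finset.prod_congr rfl
      intro p hp
      exact hMfac p (Finset.mem_filter.mp hp).2.1
  rw [Finset.sum_mul, Finset.sum_congr rfl (fun i _ => hterm i)]
  -- RHS transformation
  have hrhs : (@MvPowerSeries.C (Fin n) ℂ _ ((-1 : ℂ) ^ (n - 1) * (a ^ n - b ^ n) / (a - b)) *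
      ∏ p ∈ Finset.univ.filter (fun p : Fin n × Fin n => p.1 ≠ p.2),
        (MvPowerSeries.X p.2 - MvPowerSeries.X p.1)) * (Z1 * Z2)
      = @MvPowerSeries.C (Fin n) ℂ _ ((-1 : ℂ) ^ (n - 1) * (a ^ n - b ^ n) / (a - b)) *
        ∏ p ∈ Finset.univ.filter (fun p : Fin n × Fin n => p.1 ≠ p.2),
          (E a p.2 * E b p.1 - E b p.2 * E a p.1) := by
    rw [hZ1, hZ2, mul_assoc]
    congr 1
    rw [← mul_assoc, ← Finset.prod_mul_distrib, ← Finset.prod_mul_distrib]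
    apply Finset.prod_congr rfl
    intro p hp
    exact hMfac p (Finset.mem_filter.mp hp).2
  rw [hrhs]
  exact mv_identity (by omega) a b hab hMne

end AssemblyPart

end Hirz

open Hirz in
/-- There is a unique formal power series `Q` with
`Q (exp(aX) - exp(bX)) = X (a exp(bX) - b exp(aX))` (the `Q`-series of the Todd function);
it has constant coefficient `1` and is a series solution of the Hirzebruch functional
equation for every `n ≥ 2` with constant `c = (-1)^{n-1} (aⁿ - bⁿ)/(a - b)`. -/
theorem todd_series_solves_hirzebruch (a b : ℂ) (hab : a ≠ b) :
    (∃! Q : PowerSeries ℂ,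
      Q * (expAX a - expAX b)
        = PowerSeries.X * (PowerSeries.C (R := ℂ) a * expAX b - PowerSeries.C (R := ℂ) b * expAX a)) ∧
    ∀ Q : PowerSeries ℂ,
      Q * (expAX a - expAX b)
          = PowerSeries.X * (PowerSeries.C (R := ℂ) a * expAX b - PowerSeries.C (R := ℂ) b * expAX a) →
        PowerSeries.constantCoeff (R := ℂ) Q = 1 ∧
          ∀ n : ℕ, 2 ≤ n →
            HirzebruchSeriesEq n ((-1) ^ (n - 1) * (a ^ n - b ^ n) / (a - b)) Q := by
  have hccF : PowerSeries.constantCoeff (R := ℂ) (expAX a - expAX b) = 0 := by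
    rw [map_sub, constantCoeff_expAX, constantCoeff_expAX, sub_self]
  obtain ⟨V, hFV⟩ := PowerSeries.X_dvd_iff.mpr hccF
  have hV0 : PowerSeries.constantCoeff (R := ℂ) V = a - b := by
    have h1 : PowerSeries.coeff (R := ℂ) 1 (expAX a - expAX b) = a - b := by
      rw [map_sub, coeff_expAX, coeff_expAX]
      simp
    rw [hFV] at h1
    have h2 := PowerSeries.coeff_succ_X_mul 0 V
    rw [show (0 + 1 : ℕ) = 1 from rfl] at h2
    rw [h2] at h1
    rwa [PowerSeries.coeff_zero_eq_constantCoeff] at h1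
  have hF1ne : expAX a - expAX b ≠ 0 := by
    intro h
    have h1 : PowerSeries.coeff (R := ℂ) 1 (expAX a - expAX b) = a - b := by
      rw [map_sub, coeff_expAX, coeff_expAX]
      simp
    rw [h, map_zero] at h1
    exact sub_ne_zero_of_ne hab h1.symm
  have hVunit : IsUnit V := by
    rw [PowerSeries.isUnit_iff_constantCoeff, hV0]
    exact (sub_ne_zero_of_ne hab).isUnit
  obtain ⟨W, hW⟩ := hVunit
  have hXne : (PowerSeries.X : PowerSeries ℂ) ≠ 0 := PowerSeries.X_ne_zero
  constructor
  · refine ⟨(PowerSeries.C (R := ℂ) a * expAX b - PowerSeries.C (R := ℂ) b * expAX a) * ↑W⁻¹, ?_, ?_⟩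
    · calc (PowerSeries.C (R := ℂ) a * expAX b - PowerSeries.C (R := ℂ) b * expAX a) * ↑W⁻¹ *
            (expAX a - expAX b)
          = (PowerSeries.C (R := ℂ) a * expAX b - PowerSeries.C (R := ℂ) b * expAX a) * ↑W⁻¹ *
            (PowerSeries.X * V) := by rw [hFV]
        _ = PowerSeries.X * ((PowerSeries.C (R := ℂ) a * expAX b - PowerSeries.C (R := ℂ) b * expAX a) *
              ((↑W⁻¹ : PowerSeries ℂ) * ↑W)) := by rw [← hW]; ring
        _ = PowerSeries.X * (PowerSeries.C (R := ℂ) a * expAX b - PowerSeries.C (R := ℂ) b * expAX a) := by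
            rw [W.inv_mul, mul_one]
    · intro y hy
      apply mul_right_cancel₀ hF1ne
      rw [hy]
      calc PowerSeries.X * (PowerSeries.C (R := ℂ) a * expAX b - PowerSeries.C (R := ℂ) b * expAX a)
          = (PowerSeries.C (R := ℂ) a * expAX b - PowerSeries.C (R := ℂ) b * expAX a) * ↑W⁻¹ *
            (PowerSeries.X * V) := by
            rw [← hW]
            calc PowerSeries.X * (PowerSeries.C (R := ℂ) a * expAX b - PowerSeries.C (R := ℂ) b * expAX a)
                = (PowerSeries.C (R := ℂ) a * expAX b - PowerSeries.C (R := ℂ) b * expAX a) *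
                  ((↑W⁻¹ : PowerSeries ℂ) * ↑W) * PowerSeries.X := by rw [W.inv_mul, mul_one]; ring
              _ = _ := by ring
        _ = (PowerSeries.C (R := ℂ) a * expAX b - PowerSeries.C (R := ℂ) b * expAX a) * ↑W⁻¹ *
            (expAX a - expAX b) := by rw [← hFV]
  · intro Q hQ
    have hQV : Q * V = PowerSeries.C (R := ℂ) a * expAX b - PowerSeries.C (R := ℂ) b * expAX a := by
      apply mul_left_cancel₀ hXne
      rw [hFV] at hQ
      rw [← hQ]
      ring
    constructor
    · have hcc := congrArg (PowerSeries.constantCoeff (R := ℂ)) hQV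
      rw [map_mul, hV0, map_sub, map_mul, map_mul, PowerSeries.constantCoeff_C,
        PowerSeries.constantCoeff_C, constantCoeff_expAX, constantCoeff_expAX,
        mul_one, mul_one] at hcc
      have := mul_right_cancel₀ (sub_ne_zero_of_ne hab)
        (hcc.trans (one_mul (a - b)).symm)
      exact this
    · intro n hn
      exact hirzebruch_of_QV hn a b hab Q V hFV hQV
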